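/- Let b > 0 and M : [b,∞) → (0,∞) be non-decreasing, continuous, and satisfy log s = o(M(s)) as s → ∞. Then M_inf(s) := inf_{λ>1} M(λs)/log λ is continuous on [b,∞); moreover, for each s > b there exist 1 < λ₁ < λ₂ such that M_inf(σ) = min_{λ₁ ≤ λ ≤ λ₂} M(λσ)/log λ for all σ ∈ [b,s], i.e., the infimum is attained on a compact λ-interval uniformly for σ ∈ [b,s]. -/

import Mathlib

open Set Real

private lemma stmt18_bdd (b : ℝ) (hb : 0 < b) (M : ℝ → ℝ)
    (hMpos : ∀ s, b ≤ s → 0 < M s) {σ : ℝ} (hσ : b ≤ σ) :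
    BddBelow (Set.range fun l : Set.Ioi (1:ℝ) => M ((l : ℝ) * σ) / Real.log l) := by
  refine ⟨0, ?_⟩
  rintro x ⟨⟨l, hl⟩, rfl⟩
  have hl1 : (1:ℝ) < l := hl
  have hσ0 : 0 < σ := hb.trans_le hσ
  have hlσ : b ≤ l * σ := le_trans hσ (by nlinarith)
  exact div_nonneg (hMpos _ hlσ).le (Real.log_nonneg hl1.le)

set_option maxHeartbeats 1600000 in
/-- Key lemma: uniform attainment of the infimum on a compact interval. -/
private lemma stmt18_key (b : ℝ) (hb : 0 < b) (M : ℝ → ℝ)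
    (hMpos : ∀ s, b ≤ s → 0 < M s)
    (hmono : MonotoneOn M (Set.Ici b))
    (hcont : ContinuousOn M (Set.Ici b))
    (hsmall : ∀ ε > (0:ℝ), ∃ s₀ : ℝ, ∀ s, s₀ ≤ s → Real.log s ≤ ε * M s)
    (s : ℝ) (hs : b < s) :
    ∃ lam₁ lam₂ : ℝ, 1 < lam₁ ∧ lam₁ < lam₂ ∧
      ∀ σ ∈ Set.Icc b s, ∃ lam ∈ Set.Icc lam₁ lam₂,
        (∀ l ∈ Set.Icc lam₁ lam₂, M (lam * σ) / Real.log lam ≤ M (l * σ) / Real.log l) ∧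
        M (lam * σ) / Real.log lam =
          ⨅ l : Set.Ioi (1:ℝ), M ((l : ℝ) * σ) / Real.log l := by
  have hs0 : 0 < s := hb.trans hs
  have he1 : (2:ℝ) < Real.exp 1 := by
    have := Real.exp_one_gt_d9; linarith
  set e := Real.exp 1 with he_def
  have hes : b ≤ e * s := by nlinarith
  set C := M (e * s) with hC_def
  have hC : 0 < C := hMpos _ hes
  set lam₁ := min 2 (Real.exp (M b / (2 * C))) with hlam₁_def
  have hMb : 0 < M b := hMpos b le_rfl
  have hlam₁ : 1 < lam₁ := by
    refine lt_min (by norm_num) ?_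
    rw [show (1:ℝ) = Real.exp 0 by simp]
    exact Real.exp_lt_exp.2 (by positivity)
  -- get s₀ from the smallness hypothesis
  obtain ⟨s₀, hs₀⟩ := hsmall (1 / (2 * (C + 1))) (by positivity)
  set lam₂ := max (max (e + 1) (max s₀ 1 / b + 1)) (Real.exp (2 * |Real.log b| + 1))
    with hlam₂_def
  have he_lam₂ : e < lam₂ := lt_of_lt_of_le (by linarith) (le_trans (le_max_left _ _) (le_max_left _ _))
  have hlam₁₂ : lam₁ < lam₂ := lt_of_le_of_lt (min_le_left _ _) (by linarith)
  have hlam₁e : lam₁ ≤ e := le_trans (min_le_left _ _) (by linarith)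
  -- Claim A : small l gives big values
  have claimA : ∀ σ ∈ Icc b s, ∀ l : ℝ, 1 < l → l < lam₁ → C < M (l * σ) / Real.log l := by
    rintro σ ⟨hσ1, hσ2⟩ l hl1 hl2
    have hσ0 : 0 < σ := hb.trans_le hσ1
    have hlσ : b ≤ l * σ := le_trans hσ1 (by nlinarith)
    have hlog : 0 < Real.log l := Real.log_pos hl1
    have hlogA : Real.log l < M b / (2 * C) := by
      calc Real.log l < Real.log lam₁ := Real.log_lt_log (by linarith) hl2
        _ ≤ Real.log (Real.exp (M b / (2 * C))) :=
            Real.log_le_log (by linarith) (min_le_right _ _)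
        _ = M b / (2 * C) := Real.log_exp _
    have hMl : M b ≤ M (l * σ) := hmono (le_refl b) hlσ (le_trans hσ1 (by nlinarith))
    rw [lt_div_iff₀ hlog]
    have : C * Real.log l < C * (M b / (2 * C)) := by
      exact mul_lt_mul_of_pos_left hlogA hC
    have heq : C * (M b / (2 * C)) = M b / 2 := by field_simp
    nlinarith
  -- Claim B : large l gives big values
  have claimB : ∀ σ ∈ Icc b s, ∀ l : ℝ, lam₂ < l → C < M (l * σ) / Real.log l := by
    rintro σ ⟨hσ1, hσ2⟩ l hl2
    have hl1 : (1:ℝ) < l := by linarith [hlam₁₂, hlam₁]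
    have hσ0 : 0 < σ := hb.trans_le hσ1
    have hlog : 0 < Real.log l := Real.log_pos hl1
    have hlσb : s₀ ≤ l * σ := by
      have h1 : max s₀ 1 / b + 1 ≤ lam₂ := le_trans (le_max_right _ _) (le_max_left _ _)
      have h2 : max s₀ 1 / b < l := by linarith
      have h3 : max s₀ 1 < l * b := by
        rw [div_lt_iff₀ hb] at h2; linarith
      have : s₀ ≤ max s₀ 1 := le_max_left _ _
      nlinarith
    have hsmall' := hs₀ _ hlσb
    have hloglam₂ : 2 * |Real.log b| + 1 ≤ Real.log l := by
      calc 2 * |Real.log b| + 1 = Real.log (Real.exp (2 * |Real.log b| + 1)) :=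
            (Real.log_exp _).symm
        _ ≤ Real.log lam₂ := Real.log_le_log (Real.exp_pos _) (le_max_right _ _)
        _ ≤ Real.log l := Real.log_le_log (by positivity) hl2.le
    have hlogmul : Real.log (l * σ) = Real.log l + Real.log σ :=
      Real.log_mul (by linarith) (by linarith)
    have hlogσ : Real.log b ≤ Real.log σ := Real.log_le_log hb hσ1
    have habs : -|Real.log b| ≤ Real.log b := neg_abs_le _
    have hhalf : Real.log l / 2 ≤ Real.log (l * σ) := by
      rw [hlogmul]
      have : |Real.log b| ≤ Real.log l / 2 := by linarith
      linarith
    have hlσ : b ≤ l * σ := le_trans hσ1 (by nlinarith)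
    have hMbig : (C + 1) * Real.log l ≤ M (l * σ) := by
      have h2 : Real.log l / 2 ≤ 1 / (2 * (C + 1)) * M (l * σ) := le_trans hhalf hsmall'
      have h3 : 2 * (C + 1) * (Real.log l / 2) ≤
          2 * (C + 1) * (1 / (2 * (C + 1)) * M (l * σ)) :=
        mul_le_mul_of_nonneg_left h2 (by positivity)
      have h4 : 2 * (C + 1) * (1 / (2 * (C + 1)) * M (l * σ)) = M (l * σ) := by
        field_simp
      nlinarith
    rw [lt_div_iff₀ hlog]
    nlinarith [hMbig, hlog, mul_pos (by linarith : (0:ℝ) < 1) hlog]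
  -- value at e is at most C
  have claimE : ∀ σ ∈ Icc b s, M (e * σ) / Real.log e ≤ C := by
    rintro σ ⟨hσ1, hσ2⟩
    have hσ0 : 0 < σ := hb.trans_le hσ1
    have h1 : b ≤ e * σ := le_trans hσ1 (by nlinarith)
    have h2 : e * σ ≤ e * s := by nlinarith
    have : M (e * σ) ≤ M (e * s) := hmono h1 hes h2
    rw [he_def, Real.log_exp, div_one]
    exact this
  refine ⟨lam₁, lam₂, hlam₁, hlam₁₂, ?_⟩
  rintro σ hσmem
  obtain ⟨hσ1, hσ2⟩ := hσmem
  have hσ0 : 0 < σ := hb.trans_le hσ1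
  -- continuity of g on the compact interval
  have hg : ContinuousOn (fun l => M (l * σ) / Real.log l) (Icc lam₁ lam₂) := by
    apply ContinuousOn.div
    · apply hcont.comp (continuousOn_id.mul continuousOn_const)
      rintro l ⟨hl1, hl2⟩
      simp only [Pi.mul_apply, id, mem_Ici]
      nlinarith
    · apply Real.continuousOn_log.comp continuousOn_id
      rintro l ⟨hl1, hl2⟩
      simp only [id, mem_compl_iff, mem_singleton_iff]
      intro h; rw [h] at hl1; linarith
    · rintro l ⟨hl1, hl2⟩
      exact ne_of_gt (Real.log_pos (by linarith))
  obtain ⟨lam, hlam_mem, hlam_min⟩ :=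
    isCompact_Icc.exists_isMinOn (nonempty_Icc.2 hlam₁₂.le) hg
  have hmin : ∀ l ∈ Icc lam₁ lam₂, M (lam * σ) / Real.log lam ≤ M (l * σ) / Real.log l :=
    fun l hl => hlam_min hl
  refine ⟨lam, hlam_mem, hmin, ?_⟩
  have hlam1 : (1:ℝ) < lam := lt_of_lt_of_le hlam₁ hlam_mem.1
  have hbdd := stmt18_bdd b hb M hMpos hσ1
  have h_e_mem : e ∈ Icc lam₁ lam₂ := ⟨hlam₁e, he_lam₂.le⟩
  have hlamC : M (lam * σ) / Real.log lam ≤ C :=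
    le_trans (hmin e h_e_mem) (claimE σ ⟨hσ1, hσ2⟩)
  refine le_antisymm ?_ (ciInf_le hbdd ⟨lam, hlam1⟩)
  refine le_ciInf ?_
  rintro ⟨l, hl⟩
  have hl1 : (1:ℝ) < l := hl
  rcases lt_or_ge l lam₁ with h | h
  · exact le_trans hlamC (claimA σ ⟨hσ1, hσ2⟩ l hl1 h).le
  · rcases le_or_gt l lam₂ with h' | h'
    · exact hmin l ⟨h, h'⟩
    · exact le_trans hlamC (claimB σ ⟨hσ1, hσ2⟩ l h').le

set_option maxHeartbeats 1600000 in
theorem stmt18 (b : ℝ) (hb : 0 < b) (M : ℝ → ℝ)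
    (hMpos : ∀ s, b ≤ s → 0 < M s)
    (hmono : MonotoneOn M (Set.Ici b))
    (hcont : ContinuousOn M (Set.Ici b))
    (hsmall : ∀ ε > (0:ℝ), ∃ s₀ : ℝ, ∀ s, s₀ ≤ s → Real.log s ≤ ε * M s) :
    ContinuousOn (fun σ => ⨅ l : Set.Ioi (1:ℝ), M ((l : ℝ) * σ) / Real.log l)
      (Set.Ici b) ∧
    ∀ s, b < s → ∃ lam₁ lam₂ : ℝ, 1 < lam₁ ∧ lam₁ < lam₂ ∧
      ∀ σ ∈ Set.Icc b s, ∃ lam ∈ Set.Icc lam₁ lam₂,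
        M (lam * σ) / Real.log lam =
          ⨅ l : Set.Ioi (1:ℝ), M ((l : ℝ) * σ) / Real.log l := by
  constructor
  · -- continuity
    set F := fun σ => ⨅ l : Set.Ioi (1:ℝ), M ((l : ℝ) * σ) / Real.log l with hF
    intro σ₀ hσ₀
    have hσ₀b : b ≤ σ₀ := hσ₀
    set s := σ₀ + 1 with hs_def
    have hs : b < s := by linarith
    obtain ⟨lam₁, lam₂, hlam₁, hlam₁₂, hatt⟩ :=
      stmt18_key b hb M hMpos hmono hcont hsmall s hs
    -- joint uniform continuity on the compact product set
    set K := Icc b s ×ˢ Icc lam₁ lam₂ with hK_def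
    have hKc : IsCompact K := isCompact_Icc.prod isCompact_Icc
    have hf2 : ContinuousOn (fun p : ℝ × ℝ => M (p.2 * p.1) / Real.log p.2) K := by
      apply ContinuousOn.div
      · apply hcont.comp ((continuous_snd.mul continuous_fst).continuousOn)
        rintro ⟨x, l⟩ ⟨⟨hx1, hx2⟩, ⟨hl1, hl2⟩⟩
        simp only [mem_Ici, Pi.mul_apply]
        nlinarith
      · apply Real.continuousOn_log.comp continuous_snd.continuousOn
        rintro ⟨x, l⟩ ⟨⟨hx1, hx2⟩, ⟨hl1, hl2⟩⟩
        simp only [mem_compl_iff, mem_singleton_iff]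
        intro h
        subst h
        norm_num at hl1
        linarith
      · rintro ⟨x, l⟩ ⟨⟨hx1, hx2⟩, ⟨hl1, hl2⟩⟩
        exact ne_of_gt (Real.log_pos (by linarith))
    have huc := hKc.uniformContinuousOn_of_continuous hf2
    rw [Metric.uniformContinuousOn_iff] at huc
    rw [Metric.continuousWithinAt_iff]
    intro ε hε
    obtain ⟨δ₀, hδ₀, hδ⟩ := huc ε hε
    refine ⟨min δ₀ 1, lt_min hδ₀ one_pos, ?_⟩
    intro σ hσmem hdist
    have hσb : b ≤ σ := hσmem
    have hσs : σ ≤ s := by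
      have := abs_lt.1 (lt_of_lt_of_le hdist (min_le_right _ _))
      rw [Real.dist_eq] at hdist
      have h2 : |σ - σ₀| < 1 := lt_of_lt_of_le hdist (min_le_right _ _)
      have := abs_lt.1 h2
      linarith [this.2]
    have hσ₀s : σ₀ ≤ s := by linarith
    obtain ⟨lam, hlam_mem, -, hlam_eq⟩ := hatt σ ⟨hσb, hσs⟩
    obtain ⟨lam', hlam'_mem, -, hlam'_eq⟩ := hatt σ₀ ⟨hσ₀b, hσ₀s⟩
    have hdistδ₀ : dist σ σ₀ < δ₀ := lt_of_lt_of_le hdist (min_le_left _ _)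
    -- key estimate: |f σ l - f σ₀ l| < ε for l in the interval
    have hest : ∀ l ∈ Icc lam₁ lam₂,
        dist (M (l * σ) / Real.log l) (M (l * σ₀) / Real.log l) < ε := by
      intro l hl
      have := hδ (σ, l) ⟨⟨hσb, hσs⟩, hl⟩ (σ₀, l) ⟨⟨hσ₀b, hσ₀s⟩, hl⟩ ?_
      · exact this
      · rw [Prod.dist_eq]
        simp only [dist_self]
        rw [max_eq_left dist_nonneg]
        exact hdistδ₀
    -- now bound the difference of the infima
    have h1 : F σ ≤ M (lam' * σ) / Real.log lam' := by
      rw [hF]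
      have hlam'1 : (1:ℝ) < lam' := lt_of_lt_of_le hlam₁ hlam'_mem.1
      exact ciInf_le (stmt18_bdd b hb M hMpos hσb) ⟨lam', hlam'1⟩
    have h2 : F σ₀ ≤ M (lam * σ₀) / Real.log lam := by
      rw [hF]
      have hlam1 : (1:ℝ) < lam := lt_of_lt_of_le hlam₁ hlam_mem.1
      exact ciInf_le (stmt18_bdd b hb M hMpos hσ₀b) ⟨lam, hlam1⟩
    have e1 : F σ = M (lam * σ) / Real.log lam := hlam_eq.symm
    have e2 : F σ₀ = M (lam' * σ₀) / Real.log lam' := hlam'_eq.symm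
    have d1 := hest lam hlam_mem
    have d2 := hest lam' hlam'_mem
    rw [Real.dist_eq] at d1 d2 ⊢
    have a1 := abs_lt.1 d1
    have a2 := abs_lt.1 d2
    rw [abs_lt]
    constructor
    · -- -ε < F σ - F σ₀
      have : F σ₀ ≤ M (lam * σ₀) / Real.log lam := h2
      have : F σ₀ - F σ = F σ₀ - M (lam * σ) / Real.log lam := by rw [e1]
      nlinarith [a1.1, a1.2, h2, e1, e2]
    · nlinarith [a2.1, a2.2, h1, e1, e2]
  · intro s hs
    obtain ⟨lam₁, lam₂, h1, h2, h3⟩ := stmt18_key b hb M hMpos hmono hcont hsmall s hs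
    exact ⟨lam₁, lam₂, h1, h2, fun σ hσ => by
      obtain ⟨lam, hmem, _, heq⟩ := h3 σ hσ; exact ⟨lam, hmem, heq⟩⟩
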